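/- With the setup described in the context, for a in the image of 𝒞 and i in the image of 𝒞* on the class 𝒞_a define t'_{a,i} = a + i + s_{r,a} − s_r − r ∈ Γ₀. Then for every s ∈ Γ₀, all a, b in the image of 𝒞, and all x ∈ 𝒞_a, y ∈ 𝒞_b with x ≠ y, the following identity holds in Γ₀/H': c({x, y}) + (image of s + 𝒞(x) + 𝒞(y)) = image of s + s_r + 2r + t'_{a, 𝒞*(x)} + t'_{b, 𝒞*(y)}. -/

import Mathlib

/-- In the Phase-2 setup, with `t'_{a,i} = a + i + s_{r,a} − s_r − r`, for any
`s ∈ Γ₀`, any `a, b` in the image of `𝒞` and any distinct `x ∈ 𝒞_a`, `y ∈ 𝒞_b`,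
we have `c({x,y}) + (s + 𝒞(x) + 𝒞(y) + H') = s + s_r + 2r + t'_{a,𝒞*(x)} +
t'_{b,𝒞*(y)} + H'` in `Γ₀/H'`. -/
theorem stmt_6 (n d d' Δ : ℕ) (hn : 0 < n) (hd : 0 < d) (hd' : 0 < d')
    (hΔ : 2 ≤ Δ) (hdΔ : d ≤ Δ) (hd'Δ : d' ≤ Δ)
    (κ : ℕ) (hκ : κ = Nat.gcd d (Nat.gcd d' n))
    (Γ₀ : Type*) [AddCommGroup Γ₀] [Fintype Γ₀] [DecidableEq Γ₀]
    (hΓ₀ : Fintype.card Γ₀ = n)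
    (Γ H' : AddSubgroup Γ₀) (hH'Γ : H' ≤ Γ)
    (X : Type*) [Fintype X] [DecidableEq X]
    (c : Sym2 X → Γ₀ ⧸ H')
    -- pair colours lie in the image of Γ in Γ₀/H'
    (hcΓ : ∀ x y : X, x ≠ y → ∃ g ∈ Γ, c s(x, y) = QuotientAddGroup.mk g)
    (𝒞 : X → Γ₀)
    -- nonempty colour classes have at least 2Δ² elements
    (hclass : ∀ t : Γ₀, (∃ x, 𝒞 x = t) →
      2 * Δ ^ 2 ≤ (Finset.univ.filter (fun x => 𝒞 x = t)).card)
    (Cs : X → Γ₀) (hCsΓ : ∀ x, Cs x ∈ Γ) (hCsH : ∀ x, κ • Cs x ∈ H')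
    (st : Γ₀ → Γ₀) (hstΓ : ∀ t : Γ₀, (∃ x, 𝒞 x = t) → st t ∈ Γ)
    (hst : ∀ t : Γ₀, ∀ x y : X, x ≠ y → 𝒞 x = t → 𝒞 y = t →
      c s(x, y) = QuotientAddGroup.mk (st t + Cs x + Cs y))
    -- X has no (d, 2)-gadget and no (d', 2)-gadget
    (hgad : ∀ e : ℕ, e = d ∨ e = d' → ∀ A : Finset X, A.card = e →
      ∀ w ∉ A, ∀ w' ∉ A,
        (∑ u ∈ A, c s(u, w)) + QuotientAddGroup.mk (e • 𝒞 w)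
          = (∑ u ∈ A, c s(u, w')) + QuotientAddGroup.mk (e • 𝒞 w'))
    -- the cross-class constants s_{a,b}
    (sab : Γ₀ → Γ₀ → Γ₀)
    (hsabΓ : ∀ a b : Γ₀, (∃ x, 𝒞 x = a) → (∃ x, 𝒞 x = b) → sab a b ∈ Γ)
    (hsaa : ∀ a : Γ₀, (∃ x, 𝒞 x = a) → sab a a = st a)
    (hsab : ∀ a b : Γ₀, ∀ a₁ b₁ : X, 𝒞 a₁ = a → 𝒞 b₁ = b → a₁ ≠ b₁ →
      c s(a₁, b₁) = QuotientAddGroup.mk (sab a b + Cs a₁ + Cs b₁))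
    (r : Γ₀) (hr : ∃ x, 𝒞 x = r) :
    ∀ sh : Γ₀, ∀ a b : Γ₀, (∃ x, 𝒞 x = a) → (∃ x, 𝒞 x = b) →
      ∀ x y : X, 𝒞 x = a → 𝒞 y = b → x ≠ y →
        c s(x, y) + QuotientAddGroup.mk (sh + 𝒞 x + 𝒞 y)
          = QuotientAddGroup.mk (sh + st r + 2 • r
              + (a + Cs x + sab r a - st r - r)
              + (b + Cs y + sab r b - st r - r)) := by
  intro sh a b ha hb x y hx hy hxy
  classical
  -- the class of r
  set Cr : Finset X := Finset.univ.filter (fun z => 𝒞 z = r) with hCrdef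
  have hCrcard : 2 * Δ ^ 2 ≤ Cr.card := hclass r hr
  have hcard2 : d + 1 ≤ (Cr \ {x, y}).card := by
    have h1 : Cr.card - ({x, y} : Finset X).card ≤ (Cr \ ({x, y} : Finset X)).card :=
      Finset.le_card_sdiff _ _
    have h2 : ({x, y} : Finset X).card ≤ 2 := by
      refine le_trans (Finset.card_insert_le _ _) ?_
      simp
    have h3 : d + 3 ≤ 2 * Δ ^ 2 := by nlinarith
    have h4 : d + 3 ≤ Cr.card := le_trans h3 hCrcard
    omega
  obtain ⟨T, hTsub, hTcard⟩ := Finset.exists_subset_card_eq hcard2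
  have hT : ∀ u ∈ T, 𝒞 u = r ∧ u ≠ x ∧ u ≠ y := by
    intro u hu
    have h := hTsub hu
    rw [Finset.mem_sdiff, Finset.mem_filter] at h
    simp only [Finset.mem_insert, Finset.mem_singleton, not_or] at h
    exact ⟨h.1.2, h.2.1, h.2.2⟩
  have hTne : T.Nonempty := by rw [← Finset.card_pos, hTcard]; omega
  obtain ⟨w', hw'T⟩ := hTne
  set A' := T.erase w' with hA'def
  have hA'card : A'.card = d := by
    rw [hA'def, Finset.card_erase_of_mem hw'T, hTcard]
    omega
  have hA'ne : A'.Nonempty := by rw [← Finset.card_pos, hA'card]; exact hd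
  obtain ⟨z, hzA'⟩ := hA'ne
  set B := A'.erase z with hBdef
  have hBT : B ⊆ T := (Finset.erase_subset _ _).trans (Finset.erase_subset _ _)
  have hxT : x ∉ T := fun h => (hT x h).2.1 rfl
  have hyT : y ∉ T := fun h => (hT y h).2.2 rfl
  have hxB : x ∉ B := fun h => hxT (hBT h)
  have hzB : z ∉ B := Finset.notMem_erase _ _
  have hA'B : A' = insert z B := (Finset.insert_erase hzA').symm
  set A := insert x B with hAdef
  have hBcard : B.card = d - 1 := by
    rw [hBdef, Finset.card_erase_of_mem hzA', hA'card]
  have hAcard : A.card = d := by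
    rw [hAdef, Finset.card_insert_of_notMem hxB, hBcard]; omega
  have hyA : y ∉ A := by
    rw [hAdef, Finset.mem_insert]
    push_neg
    exact ⟨fun h => hxy h.symm, fun h => hyT (hBT h)⟩
  have hw'x : w' ≠ x := fun h => hxT (h ▸ hw'T)
  have hw'B : w' ∉ B := fun h => Finset.notMem_erase w' T (Finset.erase_subset _ _ h)
  have hw'A : w' ∉ A := by
    rw [hAdef, Finset.mem_insert]; push_neg; exact ⟨hw'x, hw'B⟩
  have hyA' : y ∉ A' := fun h => hyT (Finset.erase_subset _ _ h)
  have hw'A' : w' ∉ A' := Finset.notMem_erase _ _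
  have hw'r : 𝒞 w' = r := (hT w' hw'T).1
  have hzT : z ∈ T := Finset.erase_subset _ _ hzA'
  have hzr : 𝒞 z = r := (hT z hzT).1
  have hzy : z ≠ y := (hT z hzT).2.2
  have hzw' : z ≠ w' := Finset.ne_of_mem_erase hzA'
  have hxw' : x ≠ w' := fun h => hxT (h ▸ hw'T)
  -- sums over B
  have hsumB : ∀ (w : X) (tb : Γ₀), 𝒞 w = tb → (∀ u ∈ B, u ≠ w) →
      ∑ u ∈ B, c s(u, w)
        = QuotientAddGroup.mk (∑ u ∈ B, (sab r tb + Cs u + Cs w)) := by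
    intro w tb htb hne
    have : (QuotientAddGroup.mk (∑ u ∈ B, (sab r tb + Cs u + Cs w)) : Γ₀ ⧸ H')
        = QuotientAddGroup.mk' H' (∑ u ∈ B, (sab r tb + Cs u + Cs w)) := rfl
    rw [this, map_sum]
    refine Finset.sum_congr rfl ?_
    intro u hu
    rw [hsab r tb u w (hT u (hBT hu)).1 htb (hne u hu)]
    rfl
  have hByne : ∀ u ∈ B, u ≠ y := fun u hu h => hyT (h ▸ hBT hu)
  have hBw'ne : ∀ u ∈ B, u ≠ w' := fun u hu h => hw'B (h ▸ hu)
  -- first gadget equation, with A = insert x B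
  have h1 := hgad d (Or.inl rfl) A hAcard y hyA w' hw'A
  rw [hAdef, Finset.sum_insert hxB, Finset.sum_insert hxB,
    hsumB y b hy hByne, hsumB w' r hw'r hBw'ne,
    hsab a b x y hx hy hxy, hsab a r x w' hx hw'r hxw', hy, hw'r] at h1
  -- second gadget equation, with A' = insert z B
  have h2 := hgad d (Or.inl rfl) A' hA'card y hyA' w' hw'A'
  rw [hA'B, Finset.sum_insert hzB, Finset.sum_insert hzB,
    hsumB y b hy hByne, hsumB w' r hw'r hBw'ne,
    hsab r b z y hzr hy hzy, hsab r r z w' hzr hw'r hzw', hy, hw'r] at h2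
  -- symmetry of sab in its two arguments (mod H')
  have h3 : (QuotientAddGroup.mk (sab a r + Cs x + Cs w') : Γ₀ ⧸ H')
      = QuotientAddGroup.mk (sab r a + Cs w' + Cs x) := by
    rw [← hsab a r x w' hx hw'r hxw', ← hsab r a w' x hw'r hx (Ne.symm hxw'),
      Sym2.eq_swap]
  -- convert to membership statements
  rw [← QuotientAddGroup.mk_add, ← QuotientAddGroup.mk_add, ← QuotientAddGroup.mk_add,
    ← QuotientAddGroup.mk_add, QuotientAddGroup.eq_iff_sub_mem] at h1 h2
  rw [QuotientAddGroup.eq_iff_sub_mem] at h3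
  rw [hsaa r hr] at h1 h2
  -- target
  rw [hsab a b x y hx hy hxy, hx, hy, ← QuotientAddGroup.mk_add,
    QuotientAddGroup.eq_iff_sub_mem]
  have hfin := H'.add_mem (H'.sub_mem h1 h2) h3
  have heq : (sab a b + Cs x + Cs y + (sh + a + b)) -
      (sh + st r + 2 • r + (a + Cs x + sab r a - st r - r)
        + (b + Cs y + sab r b - st r - r))
      = ((sab a b + Cs x + Cs y + (∑ u ∈ B, (sab r b + Cs u + Cs y)) + d • b
          - (sab a r + Cs x + Cs w' + (∑ u ∈ B, (st r + Cs u + Cs w')) + d • r))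
        - (sab r b + Cs z + Cs y + (∑ u ∈ B, (sab r b + Cs u + Cs y)) + d • b
          - (st r + Cs z + Cs w' + (∑ u ∈ B, (st r + Cs u + Cs w')) + d • r)))
        + ((sab a r + Cs x + Cs w') - (sab r a + Cs w' + Cs x)) := by
    generalize (∑ u ∈ B, (sab r b + Cs u + Cs y)) = S1
    generalize (∑ u ∈ B, (st r + Cs u + Cs w')) = S2
    generalize d • b = p1
    generalize d • r = p2
    abel
  rw [heq]
  exact hfin
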